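/- Let (A,m) be local, J ⊆ Rad(B), J ⊆ f(A), and f(Reg(A)) = Reg(B). Then A ⋈^f J is a Prüfer ring if and only if A is a Prüfer ring and J = f(a)J for every a ∈ m \ Z(A). -/

import Mathlib

variable {A B : Type*} [CommRing A] [CommRing B]

/-- The amalgamation `A ⋈^f J` of `A` and `B` along the ideal `J` with respect to `f`,
as a subring of `A × B`. -/
def amalg (f : A →+* B) (J : Ideal B) : Subring (A × B) where
  carrier := {p | ∃ a, ∃ j ∈ J, p = (a, f a + j)}
  zero_mem' := ⟨0, 0, J.zero_mem, by ext <;> simp⟩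
  one_mem' := ⟨1, 0, J.zero_mem, by ext <;> simp⟩
  add_mem' := by
    rintro _ _ ⟨a, j, hj, rfl⟩ ⟨a', j', hj', rfl⟩
    exact ⟨a + a', j + j', J.add_mem hj hj', by simp [Prod.ext_iff]; ring⟩
  neg_mem' := by
    rintro _ ⟨a, j, hj, rfl⟩
    exact ⟨-a, -j, J.neg_mem hj, by simp [Prod.ext_iff]; ring⟩
  mul_mem' := by
    rintro _ _ ⟨a, j, hj, rfl⟩ ⟨a', j', hj', rfl⟩
    exact ⟨a * a', f a * j' + j * f a' + j * j',
      J.add_mem (J.add_mem (J.mul_mem_left _ hj') (J.mul_mem_right _ hj)) (J.mul_mem_right _ hj),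
      by simp [Prod.ext_iff]; ring⟩

/-- The set of zero-divisors of a ring. -/
def zdSet (R : Type*) [CommRing R] : Set R := {a | ∃ b, b ≠ 0 ∧ a * b = 0}

/-- The content ideal of a polynomial: the ideal generated by its coefficients. -/
def contentIdeal {R : Type*} [CommRing R] (p : Polynomial R) : Ideal R :=
  Ideal.span (Set.range p.coeff)

/-- A polynomial is Gaussian if `c(ph) = c(p) c(h)` for every polynomial `h`. -/
def IsGaussianPoly {R : Type*} [CommRing R] (p : Polynomial R) : Prop :=
  ∀ h : Polynomial R, contentIdeal (p * h) = contentIdeal p * contentIdeal h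

/-- A Gaussian ring. -/
def IsGaussianRing (R : Type*) [CommRing R] : Prop :=
  ∀ p q : Polynomial R, contentIdeal (p * q) = contentIdeal p * contentIdeal q

/-- A Prüfer ring: every finitely generated regular ideal is invertible
(in the total ring of quotients). -/
def IsPruferRing (R : Type*) [CommRing R] : Prop :=
  ∀ I : Ideal R, I.FG → (∃ r ∈ I, r ∈ nonZeroDivisors R) →
    ∃ T : FractionalIdeal (nonZeroDivisors R) (FractionRing R),
      (I : FractionalIdeal (nonZeroDivisors R) (FractionRing R)) * T = 1

namespace AmalgAux

variable (f : A →+* B) (J : Ideal B)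

/-- The canonical embedding `A → A ⋈^f J`. -/
def iota : A →+* ↥(amalg f J) where
  toFun a := ⟨(a, f a), ⟨a, 0, J.zero_mem, by simp⟩⟩
  map_one' := by refine Subtype.ext ?_; simp [Prod.ext_iff]
  map_mul' x y := by refine Subtype.ext ?_; simp [Prod.ext_iff]
  map_zero' := by refine Subtype.ext ?_; simp [Prod.ext_iff]
  map_add' x y := by refine Subtype.ext ?_; simp [Prod.ext_iff]

@[simp] lemma iota_coe (a : A) : ((iota f J a : ↥(amalg f J)) : A × B) = (a, f a) := rfl

/-- The first projection `A ⋈^f J → A`. -/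
def pmap : ↥(amalg f J) →+* A := (RingHom.fst A B).comp (amalg f J).subtype

@[simp] lemma pmap_apply (x : ↥(amalg f J)) : pmap f J x = (x : A × B).1 := rfl

lemma pmap_surjective : Function.Surjective (pmap f J) := fun a => ⟨iota f J a, rfl⟩

lemma pmap_comp_iota : (pmap f J).comp (iota f J) = RingHom.id A := by
  ext a; rfl

@[simp] lemma coe_mul (x y : ↥(amalg f J)) :
    ((x * y : ↥(amalg f J)) : A × B) = (x : A × B) * (y : A × B) := rfl

@[simp] lemma coe_add (x y : ↥(amalg f J)) :
    ((x + y : ↥(amalg f J)) : A × B) = (x : A × B) + (y : A × B) := rfl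

@[simp] lemma coe_sub (x y : ↥(amalg f J)) :
    ((x - y : ↥(amalg f J)) : A × B) = (x : A × B) - (y : A × B) := rfl

lemma snd_sub_mem (x : ↥(amalg f J)) : (x : A × B).2 - f (x : A × B).1 ∈ J := by
  obtain ⟨a, j, hj, hx⟩ := x.2
  rw [show ((x : A × B)) = (a, f a + j) from hx]
  simpa using hj

lemma snd_mem_of_fst_zero {x : ↥(amalg f J)} (h : (x : A × B).1 = 0) : (x : A × B).2 ∈ J := by
  have := snd_sub_mem f J x
  rw [h] at this
  simpa using this

lemma ext_zero {x : ↥(amalg f J)} (h1 : (x : A × B).1 = 0) (h2 : (x : A × B).2 = 0) : x = 0 := by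
  refine Subtype.ext ?_
  refine Prod.ext ?_ ?_ <;> simpa

/-- An element whose first component is a unit is a unit. -/
lemma isUnit_of_fst (hrad : J ≤ (⊥ : Ideal B).jacobson) {x : ↥(amalg f J)}
    (h : IsUnit (x : A × B).1) : IsUnit x := by
  set a := (x : A × B).1 with ha
  set b := (x : A × B).2 with hb
  have hj : b - f a ∈ J := snd_sub_mem f J x
  set j := b - f a with hjdef
  -- the inverse of `f a`
  set w := f ↑h.unit⁻¹ with hw
  have hfaw : f a * w = 1 := by
    rw [hw, ← map_mul]
    have : a * ↑h.unit⁻¹ = 1 := h.mul_val_inv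
    rw [this, map_one]
  -- b is a unit
  have hwj : IsUnit (1 + w * j) := by
    have : w * j ∈ (⊥ : Ideal B).jacobson := (Ideal.jacobson ⊥).mul_mem_left w (hrad hj)
    have := Ideal.mem_jacobson_bot.mp this 1
    simpa [add_comm] using this
  have hbeq : b = f a * (1 + w * j) := by
    have : f a * (1 + w * j) = f a + (f a * w) * j := by ring
    rw [this, hfaw, one_mul, hjdef]; ring
  have hbu : IsUnit b := by rw [hbeq]; exact (h.map f).mul hwj
  -- the inverse element
  have hmem : ((↑h.unit⁻¹ : A), (↑hbu.unit⁻¹ : B)) ∈ amalg f J := by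
    refine ⟨(↑h.unit⁻¹ : A), (↑hbu.unit⁻¹ : B) - w, ?_, by rw [hw]; ring_nf⟩
    · have : (↑hbu.unit⁻¹ : B) - w = ↑hbu.unit⁻¹ * (1 - b * w) := by
        have hbinv : ↑hbu.unit⁻¹ * b = 1 := hbu.val_inv_mul
        calc (↑hbu.unit⁻¹ : B) - w = ↑hbu.unit⁻¹ - (↑hbu.unit⁻¹ * b) * w := by rw [hbinv, one_mul]
        _ = ↑hbu.unit⁻¹ * (1 - b * w) := by ring
      rw [this]
      have h1bw : 1 - b * w = -(j * w) := by
        have : b * w = (f a + j) * w := by rw [hjdef]; ring_nf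
        rw [this, add_mul, hfaw]; ring
      rw [h1bw]
      exact Ideal.mul_mem_left _ _ (J.neg_mem (J.mul_mem_right _ hj))
  refine IsUnit.of_mul_eq_one (a := x) ⟨_, hmem⟩ ?_
  refine Subtype.ext ?_
  have : ((x * ⟨_, hmem⟩ : ↥(amalg f J)) : A × B) = (a * ↑h.unit⁻¹, b * ↑hbu.unit⁻¹) := rfl
  rw [this]
  refine Prod.ext ?_ ?_
  · simpa using h.mul_val_inv
  · simpa using hbu.mul_val_inv

lemma amalg_local [IsLocalRing A] (hrad : J ≤ (⊥ : Ideal B).jacobson) :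
    IsLocalRing ↥(amalg f J) := by
  haveI : Nontrivial ↥(amalg f J) := by
    refine ⟨0, 1, fun h => ?_⟩
    have := congrArg (fun t : ↥(amalg f J) => (t : A × B).1) h
    simpa using this
  refine IsLocalRing.of_isUnit_or_isUnit_one_sub_self fun x => ?_
  rcases IsLocalRing.isUnit_or_isUnit_one_sub_self ((x : A × B).1) with h | h
  · exact Or.inl (isUnit_of_fst f J hrad h)
  · refine Or.inr (isUnit_of_fst f J hrad ?_)
    have : ((1 - x : ↥(amalg f J)) : A × B).1 = 1 - (x : A × B).1 := rfl
    rw [this]; exact h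

end AmalgAux

namespace AmalgAux

variable (f : A →+* B) (J : Ideal B)

/-- Regular elements of the amalgamation have regular first component (uses `J ⊆ f(A)`). -/
lemma fst_nonZeroDivisor (hJf : (J : Set B) ⊆ Set.range f) {x : ↥(amalg f J)}
    (hx : x ∈ nonZeroDivisors ↥(amalg f J)) : (x : A × B).1 ∈ nonZeroDivisors A := by
  obtain ⟨a, j, hj, hxc⟩ := x.2
  have hxa : (x : A × B).1 = a := by rw [show ((x : A × B)) = (a, f a + j) from hxc]
  obtain ⟨c, hc⟩ := hJf hj
  rw [hxa]
  rw [mem_nonZeroDivisors_iff_right]; intro z hz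
  -- step 1 : z * c = 0
  have hfzc : f (z * c) ∈ J := by rw [map_mul, hc]; exact J.mul_mem_left _ hj
  have hmem1 : ((z * c, 0) : A × B) ∈ amalg f J :=
    ⟨z * c, -f (z * c), J.neg_mem hfzc, by simp⟩
  have hzc : z * c = 0 := by
    have hkill : (⟨_, hmem1⟩ : ↥(amalg f J)) * x = 0 := by
      refine ext_zero f J ?_ ?_
      · have : ((⟨_, hmem1⟩ * x : ↥(amalg f J)) : A × B).1 = (z * c) * (x : A × B).1 := rfl
        rw [this, hxa, mul_assoc, mul_comm c a, ← mul_assoc, hz, zero_mul]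
      · have : ((⟨_, hmem1⟩ * x : ↥(amalg f J)) : A × B).2 = 0 * (x : A × B).2 := rfl
        rw [this, zero_mul]
    have := mem_nonZeroDivisors_iff_right.mp hx _ hkill
    have := congrArg (fun t : ↥(amalg f J) => (t : A × B).1) this
    simpa using this
  -- step 2 : z = 0
  have hkill2 : iota f J z * x = 0 := by
    refine ext_zero f J ?_ ?_
    · have : ((iota f J z * x : ↥(amalg f J)) : A × B).1 = z * (x : A × B).1 := rfl
      rw [this, hxa, hz]
    · have : ((iota f J z * x : ↥(amalg f J)) : A × B).2 = f z * (x : A × B).2 := rfl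
      rw [this, show ((x : A × B)) = (a, f a + j) from hxc]
      have : f z * (f a + j) = f (z * a) + f (z * c) := by
        rw [map_mul, map_mul, hc]; ring
      simpa [this, hz, hzc] using by rw [hz, hzc]; simp
  have := mem_nonZeroDivisors_iff_right.mp hx _ hkill2
  have := congrArg (fun t : ↥(amalg f J) => (t : A × B).1) this
  simpa using this

/-- `ι` maps regular elements to regular elements (uses `f(Reg A) ⊆ Reg B`). -/
lemma iota_nonZeroDivisor (hreg : f '' (nonZeroDivisors A : Set A) = (nonZeroDivisors B : Set B))
    {a : A} (ha : a ∈ nonZeroDivisors A) : iota f J a ∈ nonZeroDivisors ↥(amalg f J) := by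
  have hfa : f a ∈ nonZeroDivisors B := by
    have : f a ∈ (nonZeroDivisors B : Set B) := by
      rw [← hreg]; exact Set.mem_image_of_mem f ha
    exact this
  rw [mem_nonZeroDivisors_iff_right]; intro z hz
  obtain ⟨x, y, hy, hzc⟩ := z.2
  have h1 : ((z * iota f J a : ↥(amalg f J)) : A × B).1 = (z : A × B).1 * a := rfl
  have h2 : ((z * iota f J a : ↥(amalg f J)) : A × B).2 = (z : A × B).2 * f a := rfl
  have hz1 : (z : A × B).1 * a = 0 := by
    rw [← h1, hz]; rfl
  have hz2 : (z : A × B).2 * f a = 0 := by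
    rw [← h2, hz]; rfl
  have hx0 : (z : A × B).1 = 0 := mem_nonZeroDivisors_iff_right.mp ha _ hz1
  have hy0 : (z : A × B).2 = 0 := mem_nonZeroDivisors_iff_right.mp hfa _ hz2
  exact ext_zero f J hx0 hy0

end AmalgAux

theorem prufer_iff_principal (S : Type*) [CommRing S] [IsLocalRing S] :
    IsPruferRing S ↔
      ∀ I : Ideal S, I.FG → (∃ r ∈ I, r ∈ nonZeroDivisors S) → ∃ g, I = Ideal.span {g} := by
  constructor
  · intro hP I hFG hregI
    obtain ⟨T, hT⟩ := hP I hFG hregI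
    have h1 : (1 : FractionRing S) ∈
        ((I : FractionalIdeal (nonZeroDivisors S) (FractionRing S)) * T) := by
      rw [hT]; exact FractionalIdeal.one_mem_one _
    have h2 : (1 : FractionRing S) ∈
        ((I : FractionalIdeal (nonZeroDivisors S) (FractionRing S)) : Submodule S (FractionRing S))
          * (T : Submodule S (FractionRing S)) := by
      rw [← FractionalIdeal.coe_mul]
      exact FractionalIdeal.mem_coe.mpr h1
    -- decompose 1 as a finite sum of products
    have key : ∃ c : Multiset S, (algebraMap S (FractionRing S)) c.sum = 1 ∧
        ∀ r ∈ c, ∃ a ∈ I, ∃ t ∈ (T : Submodule S (FractionRing S)),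
          algebraMap S (FractionRing S) r = algebraMap S (FractionRing S) a * t := by
      refine Submodule.mul_induction_on h2 ?_ ?_
      · intro x hx y hy
        obtain ⟨a, haI, rfl⟩ := FractionalIdeal.mem_coeIdeal _ |>.mp
          (FractionalIdeal.mem_coe.mp hx)
        have hxy : algebraMap S (FractionRing S) a * y ∈
            (1 : FractionalIdeal (nonZeroDivisors S) (FractionRing S)) := by
          rw [← hT]
          exact FractionalIdeal.mul_mem_mul
            ((FractionalIdeal.mem_coeIdeal _).mpr ⟨a, haI, rfl⟩)
            (FractionalIdeal.mem_coe.mp hy)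
        obtain ⟨r, hr⟩ := (FractionalIdeal.mem_one_iff _).mp hxy
        refine ⟨{r}, by simpa using hr, ?_⟩
        intro r' hr'
        rw [Multiset.mem_singleton] at hr'
        subst hr'
        exact ⟨a, haI, y, hy, hr⟩
      · rintro x y ⟨c₁, hc₁, hc₁'⟩ ⟨c₂, hc₂, hc₂'⟩
        refine ⟨c₁ + c₂, by rw [Multiset.sum_add, map_add, hc₁, hc₂], ?_⟩
        intro r hr
        rcases Multiset.mem_add.mp hr with h | h
        exacts [hc₁' r h, hc₂' r h]
    obtain ⟨c, hcsum, hc⟩ := key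
    have hsum1 : c.sum = 1 := by
      apply IsFractionRing.injective S (FractionRing S)
      rw [hcsum, map_one]
    have hunit : ∃ r ∈ c, IsUnit r := by
      by_contra hno
      push_neg at hno
      have hmem : c.sum ∈ IsLocalRing.maximalIdeal S :=
        multiset_sum_mem c fun a ha => (IsLocalRing.mem_maximalIdeal a).mpr (hno a ha)
      rw [hsum1] at hmem
      exact ((IsLocalRing.mem_maximalIdeal 1).mp hmem) isUnit_one
    obtain ⟨r, hrc, hru⟩ := hunit
    obtain ⟨a, haI, t, htT, hrat⟩ := hc r hrc
    refine ⟨a, le_antisymm ?_ (Ideal.span_le.mpr (by simpa using haI))⟩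
    intro z hz
    have h3 : algebraMap S (FractionRing S) z * t ∈
        (1 : FractionalIdeal (nonZeroDivisors S) (FractionRing S)) := by
      rw [← hT]
      exact FractionalIdeal.mul_mem_mul
        ((FractionalIdeal.mem_coeIdeal _).mpr ⟨z, hz, rfl⟩)
        (FractionalIdeal.mem_coe.mp htT)
    obtain ⟨s, hs⟩ := (FractionalIdeal.mem_one_iff _).mp h3
    have hzr : z * r = a * s := by
      apply IsFractionRing.injective S (FractionRing S)
      rw [map_mul, map_mul, hrat, hs]
      ring
    rw [Ideal.mem_span_singleton]
    refine ⟨s * ↑hru.unit⁻¹, ?_⟩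
    have hri : r * ↑hru.unit⁻¹ = 1 := hru.mul_val_inv
    calc z = z * (r * ↑hru.unit⁻¹) := by rw [hri, mul_one]
    _ = (z * r) * ↑hru.unit⁻¹ := by ring
    _ = (a * s) * ↑hru.unit⁻¹ := by rw [hzr]
    _ = a * (s * ↑hru.unit⁻¹) := by ring
  · intro hmain I hFG hregI
    obtain ⟨g, hIg⟩ := hmain I hFG hregI
    obtain ⟨r, hrI, hrreg⟩ := hregI
    have hgreg : g ∈ nonZeroDivisors S := by
      rw [hIg] at hrI
      obtain ⟨w, hw⟩ := Ideal.mem_span_singleton'.mp hrI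
      rw [mem_nonZeroDivisors_iff_right]; intro z hz
      have : z * r = 0 := by
        rw [← hw, show z * (w * g) = w * (z * g) by ring, hz, mul_zero]
      exact mem_nonZeroDivisors_iff_right.mp hrreg z this
    have hu : IsUnit (algebraMap S (FractionRing S) g) :=
      IsLocalization.map_units (FractionRing S) ⟨g, hgreg⟩
    refine ⟨FractionalIdeal.spanSingleton (nonZeroDivisors S)
      ((hu.unit⁻¹ : (FractionRing S)ˣ) : FractionRing S), ?_⟩
    rw [hIg, FractionalIdeal.coeIdeal_span_singleton,
      FractionalIdeal.spanSingleton_mul_spanSingleton]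
    have hone : algebraMap S (FractionRing S) g * ((hu.unit⁻¹ : (FractionRing S)ˣ) : FractionRing S) = 1 :=
      hu.mul_val_inv
    rw [hone, FractionalIdeal.spanSingleton_one]

open AmalgAux in
/-- Main theorem: transfer of the Prüfer property to `A ⋈^f J`. -/
theorem amalg_prufer_iff (f : A →+* B) (J : Ideal B) [IsLocalRing A]
    (hJ : J ≠ ⊤) (hrad : J ≤ (⊥ : Ideal B).jacobson)
    (hJf : (J : Set B) ⊆ Set.range f)
    (hreg : f '' (nonZeroDivisors A : Set A) = (nonZeroDivisors B : Set B)) :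
    IsPruferRing ↥(amalg f J) ↔
      IsPruferRing A ∧
        ∀ a ∈ IsLocalRing.maximalIdeal A, a ∉ zdSet A → J = Ideal.span {f a} * J := by
  classical
  haveI hRloc : IsLocalRing ↥(amalg f J) := amalg_local f J hrad
  constructor
  · intro hR
    have hRp := (prufer_iff_principal _).mp hR
    constructor
    · rw [prufer_iff_principal]
      rintro I hFG ⟨r₀, hr₀I, hr₀⟩
      obtain ⟨g, hg⟩ := hRp (I.map (iota f J)) (hFG.map _)
        ⟨iota f J r₀, Ideal.mem_map_of_mem _ hr₀I, iota_nonZeroDivisor f J hreg hr₀⟩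
      refine ⟨pmap f J g, ?_⟩
      have hI : I = (I.map (iota f J)).map (pmap f J) := by
        rw [Ideal.map_map, pmap_comp_iota, Ideal.map_id]
      rw [hI, hg, Ideal.map_span, Set.image_singleton]
    · intro a ham hazd
      have hareg : a ∈ nonZeroDivisors A := by
        rw [mem_nonZeroDivisors_iff_right]; intro z hz
        by_contra h0
        exact hazd ⟨z, h0, by rw [mul_comm]; exact hz⟩
      refine le_antisymm ?_ Ideal.mul_le_right
      intro j hj
      set z₀ : ↥(amalg f J) := ⟨(0, j), ⟨0, j, hj, by simp⟩⟩ with hz₀def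
      set I' : Ideal ↥(amalg f J) := Ideal.span {iota f J a, z₀} with hI'def
      have hFG : I'.FG := Submodule.fg_span (Set.toFinite _)
      obtain ⟨g, hg⟩ := hRp I' hFG ⟨iota f J a,
        Ideal.subset_span (by simp), iota_nonZeroDivisor f J hreg hareg⟩
      have hgI' : g ∈ I' := by rw [hg]; exact Ideal.mem_span_singleton_self g
      obtain ⟨u, v, huv⟩ := Ideal.mem_span_pair.mp hgI'
      obtain ⟨s, hs⟩ := Ideal.mem_span_singleton'.mp
        (by rw [← hg]; exact (Ideal.subset_span (by simp) : iota f J a ∈ I'))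
      obtain ⟨e, he⟩ := Ideal.mem_span_singleton'.mp
        (by rw [← hg]; exact (Ideal.subset_span (by simp) : z₀ ∈ I'))
      -- component equations
      have huv1 : (u : A × B).1 * a + (v : A × B).1 * 0 = (g : A × B).1 :=
        congrArg (fun t : ↥(amalg f J) => (t : A × B).1) huv
      have huv2 : (u : A × B).2 * f a + (v : A × B).2 * j = (g : A × B).2 :=
        congrArg (fun t : ↥(amalg f J) => (t : A × B).2) huv
      have hs1 : (s : A × B).1 * (g : A × B).1 = a :=
        congrArg (fun t : ↥(amalg f J) => (t : A × B).1) hs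
      have he1 : (e : A × B).1 * (g : A × B).1 = 0 :=
        congrArg (fun t : ↥(amalg f J) => (t : A × B).1) he
      have he2 : (e : A × B).2 * (g : A × B).2 = j :=
        congrArg (fun t : ↥(amalg f J) => (t : A × B).2) he
      -- s1 * u1 = 1
      have h1 : (1 - (s : A × B).1 * (u : A × B).1) * a = 0 := by
        linear_combination -hs1 - (s : A × B).1 * huv1
      have hsu1 : (s : A × B).1 * (u : A × B).1 = 1 := by
        have h2 := mem_nonZeroDivisors_iff_right.mp hareg _ h1
        linear_combination -h2
      -- e1 = 0
      have he1u : ((e : A × B).1 * (u : A × B).1) * a = 0 := by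
        linear_combination he1 + (e : A × B).1 * huv1
      have he10 : (e : A × B).1 = 0 := by
        have h2 : (e : A × B).1 * (u : A × B).1 = 0 := mem_nonZeroDivisors_iff_right.mp hareg _ he1u
        calc (e : A × B).1 = (e : A × B).1 * ((s : A × B).1 * (u : A × B).1) := by
              rw [hsu1, mul_one]
        _ = (s : A × B).1 * ((e : A × B).1 * (u : A × B).1) := by ring
        _ = 0 := by rw [h2, mul_zero]
      have he2J : (e : A × B).2 ∈ J := snd_mem_of_fst_zero f J he10
      -- the key identity
      have hj_eq : (e : A × B).2 * ((u : A × B).2 * f a + (v : A × B).2 * j) = j := by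
        rw [huv2]; exact he2
      have hunit : IsUnit (1 - (e : A × B).2 * (v : A × B).2) := by
        have hm : (e : A × B).2 * (v : A × B).2 ∈ (⊥ : Ideal B).jacobson :=
          hrad (J.mul_mem_right _ he2J)
        have h := Ideal.mem_jacobson_bot.mp hm (-1)
        rwa [show (e : A × B).2 * (v : A × B).2 * (-1) + 1
          = 1 - (e : A × B).2 * (v : A × B).2 by ring] at h
      have key : j * (1 - (e : A × B).2 * (v : A × B).2)
          = f a * ((e : A × B).2 * (u : A × B).2) := by
        linear_combination -hj_eq
      have hfinal : j = f a * ((e : A × B).2 * (u : A × B).2 * ↑hunit.unit⁻¹) := by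
        have hwinv : (1 - (e : A × B).2 * (v : A × B).2) * ↑hunit.unit⁻¹ = 1 :=
          hunit.mul_val_inv
        calc j = j * ((1 - (e : A × B).2 * (v : A × B).2) * ↑hunit.unit⁻¹) := by
              rw [hwinv, mul_one]
        _ = (j * (1 - (e : A × B).2 * (v : A × B).2)) * ↑hunit.unit⁻¹ := by ring
        _ = (f a * ((e : A × B).2 * (u : A × B).2)) * ↑hunit.unit⁻¹ := by rw [key]
        _ = f a * ((e : A × B).2 * (u : A × B).2 * ↑hunit.unit⁻¹) := by ring
      exact Ideal.mem_span_singleton_mul.mpr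
        ⟨(e : A × B).2 * (u : A × B).2 * ↑hunit.unit⁻¹,
          J.mul_mem_right _ (J.mul_mem_right _ he2J), hfinal.symm⟩
  · rintro ⟨hA, hC⟩
    rw [prufer_iff_principal]
    rintro I' hFG ⟨r, hrI', hrreg⟩
    have ha₀ : (r : A × B).1 ∈ nonZeroDivisors A := fst_nonZeroDivisor f J hJf hrreg
    set I : Ideal A := I'.map (pmap f J) with hIdef
    have hr1I : (r : A × B).1 ∈ I := Ideal.mem_map_of_mem _ hrI'
    obtain ⟨α, hα⟩ := (prufer_iff_principal A).mp hA I (hFG.map _) ⟨(r : A × B).1, hr1I, ha₀⟩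
    have hαI : α ∈ I := by rw [hα]; exact Ideal.mem_span_singleton_self α
    have hαreg : α ∈ nonZeroDivisors A := by
      have hr1I' : (r : A × B).1 ∈ Ideal.span {α} := by rw [← hα]; exact hr1I
      obtain ⟨d, hd⟩ := Ideal.mem_span_singleton'.mp hr1I'
      rw [mem_nonZeroDivisors_iff_right]; intro z hz
      refine mem_nonZeroDivisors_iff_right.mp ha₀ z ?_
      rw [← hd, show z * (d * α) = d * (z * α) by ring, hz, mul_zero]
    by_cases hαu : IsUnit α
    · have hItop : I = ⊤ := Ideal.eq_top_of_isUnit_mem _ hαI hαu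
      have h1I : (1 : A) ∈ I := hItop ▸ Submodule.mem_top
      obtain ⟨h₀, hh₀I', hph₀⟩ :=
        (Ideal.mem_map_iff_of_surjective _ (pmap_surjective f J)).mp h1I
      have hu : IsUnit h₀ := isUnit_of_fst f J hrad
        (by rw [show ((h₀ : A × B)).1 = pmap f J h₀ from rfl, hph₀]; exact isUnit_one)
      refine ⟨1, ?_⟩
      rw [Ideal.span_singleton_one]
      exact Ideal.eq_top_of_isUnit_mem _ hh₀I' hu
    · have hαm : α ∈ IsLocalRing.maximalIdeal A := (IsLocalRing.mem_maximalIdeal α).mpr hαu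
      have hαnzd : α ∉ zdSet A := by
        rintro ⟨b, hb0, hab⟩
        exact hb0 (mem_nonZeroDivisors_iff_right.mp hαreg b (by rw [mul_comm]; exact hab))
      have hJα := hC α hαm hαnzd
      obtain ⟨g', hg'I', hg'p⟩ :=
        (Ideal.mem_map_iff_of_surjective _ (pmap_surjective f J)).mp hαI
      have hg'1 : (g' : A × B).1 = α := hg'p
      have hβJ : (g' : A × B).2 - f α ∈ J := by rw [← hg'1]; exact snd_sub_mem f J g'
      have hβJ' : (g' : A × B).2 - f α ∈ Ideal.span {f α} * J := by rw [← hJα]; exact hβJ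
      obtain ⟨β₁, hβ₁J, hβ₁⟩ := Ideal.mem_span_singleton_mul.mp hβJ'
      have hg'2 : (g' : A × B).2 = f α * (1 + β₁) := by linear_combination -hβ₁
      have hu1 : IsUnit (1 + β₁) := by
        have h := Ideal.mem_jacobson_bot.mp (hrad hβ₁J) 1
        rwa [show β₁ * 1 + 1 = 1 + β₁ by ring] at h
      refine ⟨g', le_antisymm ?_ (Ideal.span_le.mpr (Set.singleton_subset_iff.mpr hg'I'))⟩
      intro h hhI'
      have hphI : (h : A × B).1 ∈ Ideal.span {α} := by
        rw [← hα]; exact Ideal.mem_map_of_mem _ hhI'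
      obtain ⟨s, hs⟩ := Ideal.mem_span_singleton'.mp hphI
      set k : ↥(amalg f J) := h - iota f J s * g' with hk
      have hkI' : k ∈ I' := I'.sub_mem hhI' (I'.mul_mem_left _ hg'I')
      have hk1 : (k : A × B).1 = 0 := by
        have hc : (k : A × B).1 = (h : A × B).1 - s * (g' : A × B).1 := rfl
        rw [hc, hg'1, ← hs]; ring
      have hk2J : (k : A × B).2 ∈ J := snd_mem_of_fst_zero f J hk1
      have hk2J' : (k : A × B).2 ∈ Ideal.span {f α} * J := by rw [← hJα]; exact hk2J
      obtain ⟨z₀', hz₀'J, hz₀'⟩ := Ideal.mem_span_singleton_mul.mp hk2J'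
      set z : B := ↑hu1.unit⁻¹ * z₀' with hzdef
      have hzJ : z ∈ J := J.mul_mem_left _ hz₀'J
      set zel : ↥(amalg f J) := ⟨(0, z), ⟨0, z, hzJ, by simp⟩⟩ with hzel
      have hkz : k = zel * g' := by
        refine Subtype.ext (Prod.ext ?_ ?_)
        · have hc : ((zel * g' : ↥(amalg f J)) : A × B).1 = 0 * (g' : A × B).1 := rfl
          rw [hc, zero_mul, hk1]
        · have hc : ((zel * g' : ↥(amalg f J)) : A × B).2 = z * (g' : A × B).2 := rfl
          rw [hc, hg'2, hzdef]
          have hcc : ↑hu1.unit⁻¹ * z₀' * (f α * (1 + β₁))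
              = (↑hu1.unit⁻¹ * (1 + β₁)) * (f α * z₀') := by ring
          rw [hcc, hu1.val_inv_mul, one_mul, hz₀']
      rw [Ideal.mem_span_singleton']
      refine ⟨iota f J s + zel, ?_⟩
      have hdist : (iota f J s + zel) * g' = iota f J s * g' + zel * g' := by ring
      rw [hdist, ← hkz, hk]
      ring
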